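/- Let S be an integral domain, let R be a subring of S, and let G be a finite group acting on S by ring automorphisms with σ(R) ⊆ R for all σ ∈ G. Suppose (R, S) is a GD-pair: for every intermediate ring T with R ⊆ T ⊆ S, the extension R ⊆ T satisfies going-down (for all primes p₁ ⊆ p₂ of R and every prime q₂ of T with q₂ ∩ R = p₂, there exists a prime q₁ of T with q₁ ⊆ q₂ and q₁ ∩ R = p₁). Then (R^G, S^G) is also a GD-pair: for every intermediate ring T' with R^G ⊆ T' ⊆ S^G, the extension R^G ⊆ T' satisfies going-down. -/

import Mathlib

open Polynomial Pointwise

/-- The fixed subring `R^G` of a group `G` acting on a commutative ring `R`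
by ring automorphisms. -/
def fixedSubring (G R : Type*) [Group G] [CommRing R] [MulSemiringAction G R] : Subring R where
  carrier := {r : R | ∀ g : G, g • r = r}
  mul_mem' := fun ha hb g => by rw [smul_mul', ha g, hb g]
  one_mem' := fun g => smul_one g
  add_mem' := fun ha hb g => by rw [smul_add, ha g, hb g]
  zero_mem' := fun g => smul_zero g
  neg_mem' := fun ha g => by rw [smul_neg, ha g]

/-- A ring homomorphism `f : A →+* B` satisfies *going-down* if for all primes
`p₁ ⊆ p₂` of `A` and every prime `q₂` of `B` lying over `p₂`, there is a prime
`q₁ ⊆ q₂` of `B` lying over `p₁`. -/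
def GoingDown {A B : Type*} [CommRing A] [CommRing B] (f : A →+* B) : Prop :=
  ∀ (p₁ p₂ : Ideal A), p₁.IsPrime → p₂.IsPrime → p₁ ≤ p₂ →
    ∀ q₂ : Ideal B, q₂.IsPrime → q₂.comap f = p₂ →
      ∃ q₁ : Ideal B, q₁.IsPrime ∧ q₁ ≤ q₂ ∧ q₁.comap f = p₁

section Aux

variable {G : Type*} [Group G]

/-- The pointwise action of a group element sends prime ideals to prime ideals. -/
lemma aux_smul_isPrime {A : Type*} [CommRing A] [MulSemiringAction G A]
    (g : G) (P : Ideal A) (hP : P.IsPrime) : (g • P).IsPrime := by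
  have h : g • P = P.comap (MulSemiringAction.toRingHom G A g⁻¹) := by
    ext x
    rw [Ideal.mem_pointwise_smul_iff_inv_smul_mem, Ideal.mem_comap]
    rfl
  rw [h]
  exact hP.comap _

variable [Fintype G]

/-- The "norm" `∏ g, g • x` is `G`-fixed. -/
lemma aux_smul_norm {A : Type*} [CommRing A] [MulSemiringAction G A] (σ : G) (x : A) :
    σ • (∏ g : G, g • x) = ∏ g : G, g • x := by
  rw [Finset.smul_prod']
  simp_rw [smul_smul]
  exact Fintype.prod_bijective (σ * ·) (Group.mulLeft_bijective σ) _ _ fun g => rfl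

/-- The "characteristic polynomial" `∏ g, (X - C (g • x))` is `G`-fixed. -/
lemma aux_smul_charpoly {A : Type*} [CommRing A] [MulSemiringAction G A] (σ : G) (x : A) :
    σ • (∏ g : G, (X - C (g • x))) = ∏ g : G, (X - C (g • x)) := by
  rw [Finset.smul_prod']
  simp_rw [smul_sub, Polynomial.smul_X, Polynomial.smul_C, smul_smul]
  exact Fintype.prod_bijective (σ * ·) (Group.mulLeft_bijective σ) _ _ fun g => rfl

/-- Any element of a `G`-stable subring `R` is integral over any subring `W`
containing `R ⊓ fixedSubring G S`. -/
lemma aux_key {S : Type*} [CommRing S] [Nontrivial S] {R : Subring S}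
    [MulSemiringAction G S] (hstab : ∀ (g : G), ∀ r ∈ R, g • r ∈ R)
    (W : Subring S) (hW : R ⊓ fixedSubring G S ≤ W) {x : S} (hx : x ∈ R) :
    ∃ q : (↥W)[X], q.Monic ∧ Polynomial.eval₂ W.subtype x q = 0 := by
  classical
  set p : S[X] := ∏ g : G, (X - C (g • x)) with hp
  have hmonic : p.Monic := monic_prod_of_monic _ _ fun _ _ => monic_X_sub_C _
  have heval : p.eval x = 0 := by
    rw [hp, eval_prod]
    exact Finset.prod_eq_zero (Finset.mem_univ 1) (by simp)
  have hmap : p = Polynomial.map R.subtype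
      (∏ g : G, (X - C (⟨g • x, hstab g x hx⟩ : ↥R))) := by
    rw [Polynomial.map_prod]
    simp [hp]
  have hcoeffR : ∀ n, p.coeff n ∈ R := by
    intro n
    rw [hmap, coeff_map]
    exact SetLike.coe_mem _
  have hcoeffF : ∀ n, p.coeff n ∈ fixedSubring G S := by
    intro n σ
    rw [← Polynomial.coeff_smul, hp, aux_smul_charpoly]
  have hlift : p ∈ Polynomial.lifts W.subtype := by
    rw [lifts_iff_coeff_lifts]
    intro n
    exact ⟨⟨p.coeff n, hW ⟨hcoeffR n, hcoeffF n⟩⟩, rfl⟩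
  obtain ⟨q, hq, -, hqm⟩ := lifts_and_degree_eq_and_monic hlift hmonic
  exact ⟨q, hqm, by rw [eval₂_eq_eval_map, hq, heval]⟩

/-- Integrality over `A.subtype` descends to integrality of the inclusion into
any intermediate subring. -/
lemma aux_descend {S : Type*} [CommRing S] {A B : Subring S} (hAB : A ≤ B) {x : ↥B}
    (h : ∃ q : (↥A)[X], q.Monic ∧ Polynomial.eval₂ A.subtype (x : S) q = 0) :
    ∃ q : (↥A)[X], q.Monic ∧ Polynomial.eval₂ (Subring.inclusion hAB) x q = 0 := by
  obtain ⟨q, hqm, hq⟩ := h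
  refine ⟨q, hqm, ?_⟩
  have hcomp : B.subtype.comp (Subring.inclusion hAB) = A.subtype := RingHom.ext fun a => rfl
  have h2 : B.subtype (Polynomial.eval₂ (Subring.inclusion hAB) x q) = 0 := by
    rw [Polynomial.hom_eval₂, hcomp]
    exact hq
  exact Subtype.ext (by simpa using h2)

end Aux

set_option maxHeartbeats 1000000 in
set_option synthInstance.maxHeartbeats 200000 in
/-- If `G` is a finite group acting on an integral domain `S`, `R` is a `G`-stable
subring of `S`, and `(R, S)` is a GD-pair (i.e. `R ⊆ T` satisfies going-down for every
intermediate ring `R ⊆ T ⊆ S`), then `(R^G, S^G)` is also a GD-pair. -/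
theorem gdPair_fixedSubring (S : Type*) [CommRing S] [IsDomain S]
    (R : Subring S) (G : Type*) [Group G] [Fintype G] [MulSemiringAction G S]
    (hstab : ∀ (g : G), ∀ r ∈ R, g • r ∈ R)
    (hGD : ∀ (T : Subring S) (hRT : R ≤ T), GoingDown (Subring.inclusion hRT)) :
    ∀ (T' : Subring S) (h₁ : R ⊓ fixedSubring G S ≤ T'), T' ≤ fixedSubring G S →
      GoingDown (Subring.inclusion h₁) := by
  intro T' h₁ hT'F p₁ p₂ hp₁ hp₂ h12 q₂ hq₂ hq₂c
  classical
  haveI := hp₁; haveI := hp₂; haveI := hq₂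
  -- the action of G on R
  letI actR : MulSemiringAction G ↥R :=
    { smul := fun g r => ⟨g • (r : S), hstab g r r.2⟩
      one_smul := fun r => Subtype.ext (one_smul G (r : S))
      mul_smul := fun g h r => Subtype.ext (mul_smul g h (r : S))
      smul_zero := fun g => Subtype.ext (smul_zero g)
      smul_add := fun g a b => Subtype.ext (smul_add g (a : S) (b : S))
      smul_one := fun g => Subtype.ext (smul_one g)
      smul_mul := fun g a b => Subtype.ext (smul_mul' g (a : S) (b : S)) }
  set T : Subring S := R ⊔ T' with hT
  have hRT : R ≤ T := le_sup_left
  have hT'T : T' ≤ T := le_sup_right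
  have hFR : R ⊓ fixedSubring G S ≤ R := inf_le_left
  letI : Algebra ↥(R ⊓ fixedSubring G S) ↥R := (Subring.inclusion hFR).toAlgebra
  letI : Algebra ↥T' ↥T := (Subring.inclusion hT'T).toAlgebra
  letI : Algebra ↥T' S := T'.subtype.toAlgebra
  haveI intRF : Algebra.IsIntegral ↥(R ⊓ fixedSubring G S) ↥R := by
    refine ⟨fun x => ?_⟩
    obtain ⟨q, hqm, hq⟩ := aux_descend hFR (aux_key hstab (R ⊓ fixedSubring G S) le_rfl x.2)
    exact ⟨q, hqm, hq⟩
  haveI intT'T : Algebra.IsIntegral ↥T' ↥T := by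
    refine ⟨fun x => ?_⟩
    have hsub : T ≤ (integralClosure ↥T' S).toSubring := by
      rw [hT, sup_le_iff]
      constructor
      · intro r hr
        obtain ⟨q, hqm, hq⟩ := aux_key hstab T' h₁ hr
        exact ⟨q, hqm, hq⟩
      · intro t ht
        exact Subalgebra.mem_toSubring.mpr
          (Subalgebra.algebraMap_mem (integralClosure ↥T' S) (⟨t, ht⟩ : ↥T'))
    have hint : IsIntegral ↥T' (x : S) := Subalgebra.mem_toSubring.mp (hsub x.2)
    obtain ⟨q, hqm, hq⟩ := aux_descend hT'T hint
    exact ⟨q, hqm, hq⟩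
  -- Step 1: lift q₂ to a prime Q₂ of T lying over it
  obtain ⟨Q₂, -, hQ₂p, hQ₂c⟩ :=
    Ideal.exists_ideal_over_prime_of_isIntegral (R := ↥T') (S := ↥T) q₂ ⊥ (by
      intro y hy
      have h0 : Subring.inclusion hT'T y = 0 := Ideal.mem_bot.mp hy
      have hy0 : y = 0 := Subtype.ext (show ((y : S)) = 0 from congrArg Subtype.val h0)
      rw [hy0]; exact q₂.zero_mem)
  haveI := hQ₂p
  -- Step 2: pull back to R
  set P₂ : Ideal ↥R := Q₂.comap (Subring.inclusion hRT) with hP₂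
  haveI hP₂p : P₂.IsPrime := hQ₂p.comap _
  have hcomm : (Subring.inclusion hRT).comp (Subring.inclusion hFR)
      = (Subring.inclusion hT'T).comp (Subring.inclusion h₁) := RingHom.ext fun a => rfl
  have hP₂c : P₂.comap (Subring.inclusion hFR) = p₂ := by
    rw [hP₂, Ideal.comap_comap, hcomm, ← Ideal.comap_comap]
    rw [show Q₂.comap (Subring.inclusion hT'T) = q₂ from hQ₂c]
    exact hq₂c
  -- Step 3: going-down for R^G ⊆ R
  obtain ⟨P₁', -, hP₁'p, hP₁'c⟩ :=
    Ideal.exists_ideal_over_prime_of_isIntegral (R := ↥(R ⊓ fixedSubring G S)) (S := ↥R) p₁ ⊥ (by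
      intro y hy
      have h0 : Subring.inclusion hFR y = 0 := Ideal.mem_bot.mp hy
      have hy0 : y = 0 := Subtype.ext (show ((y : S)) = 0 from congrArg Subtype.val h0)
      rw [hy0]; exact p₁.zero_mem)
  haveI := hP₁'p
  obtain ⟨P₂', hge, hP₂'p, hP₂'c⟩ :=
    Ideal.exists_ideal_over_prime_of_isIntegral (R := ↥(R ⊓ fixedSubring G S)) (S := ↥R) p₂ P₁' (by
      rw [show P₁'.comap (algebraMap ↥(R ⊓ fixedSubring G S) ↥R) = p₁ from hP₁'c]; exact h12)
  haveI := hP₂'p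
  -- transitivity: P₂' is a conjugate of P₂
  have hsubset : (P₂' : Set ↥R) ⊆
      ⋃ σ ∈ ((Finset.univ : Finset G) : Set G), ((σ • P₂ : Ideal ↥R) : Set ↥R) := by
    intro x hx
    set N : ↥R := ∏ g : G, g • x with hN
    have hNmem : N ∈ P₂' := by
      rw [hN, ← Finset.mul_prod_erase Finset.univ (fun g : G => g • x) (Finset.mem_univ (1 : G))]
      exact Ideal.mul_mem_right _ _ (by rw [one_smul]; exact hx)
    have hNF : (N : S) ∈ fixedSubring G S := by
      intro σ
      have h1 : σ • N = N := aux_smul_norm σ x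
      calc σ • (N : S) = ((σ • N : ↥R) : S) := rfl
        _ = (N : S) := by rw [h1]
    have hNP₂ : N ∈ P₂ := by
      have hmem : (⟨(N : S), ⟨N.2, hNF⟩⟩ : ↥(R ⊓ fixedSubring G S)) ∈ P₂'.comap (algebraMap ↥(R ⊓ fixedSubring G S) ↥R) := by
        rw [Ideal.mem_comap]
        exact hNmem
      rw [hP₂'c] at hmem
      rw [← hP₂c] at hmem
      exact hmem
    have hprod : ∃ g ∈ (Finset.univ : Finset G), g • x ∈ P₂ := by
      rw [← Ideal.IsPrime.prod_mem_iff]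
      exact hNP₂
    obtain ⟨g, -, hg⟩ := hprod
    refine Set.mem_biUnion (Finset.mem_coe.mpr (Finset.mem_univ g⁻¹)) ?_
    rw [SetLike.mem_coe, Ideal.mem_pointwise_smul_iff_inv_smul_mem, inv_inv]
    exact hg
  obtain ⟨σ, -, hle⟩ := (Ideal.subset_union_prime (f := fun σ : G => σ • P₂) 1 1
    (fun σ _ _ _ => aux_smul_isPrime σ P₂ hP₂p)).mp hsubset
  haveI : SMulCommClass G ↥(R ⊓ fixedSubring G S) ↥R := by
    refine ⟨fun g a x => Subtype.ext ?_⟩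
    show g • ((a : S) * (x : S)) = (a : S) * (g • (x : S))
    rw [smul_mul', (Subring.mem_inf.mp a.2).2 g]
  have hcomap_smul : ∀ (g : G) (P : Ideal ↥R),
      Ideal.comap (algebraMap ↥(R ⊓ fixedSubring G S) ↥R) (g • P)
        = Ideal.comap (algebraMap ↥(R ⊓ fixedSubring G S) ↥R) P := by
    intro g P
    exact Ideal.under_smul (A := ↥(R ⊓ fixedSubring G S)) (B := ↥R) (P := P) (g := g)
  have heq : P₂' = σ • P₂ := by
    by_contra hne
    have hlt : P₂' < σ • P₂ := lt_of_le_of_ne hle hne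
    obtain ⟨-, y, hy1, hy2⟩ := SetLike.lt_iff_le_and_exists.mp hlt
    have hlt2 := Ideal.comap_lt_comap_of_integral_mem_sdiff (R := ↥(R ⊓ fixedSubring G S)) (I := P₂') (J := σ • P₂)
      hle ⟨hy1, hy2⟩ (Algebra.IsIntegral.isIntegral y)
    rw [hP₂'c, hcomap_smul] at hlt2
    rw [show P₂.comap (algebraMap ↥(R ⊓ fixedSubring G S) ↥R) = p₂ from hP₂c] at hlt2
    exact lt_irrefl _ hlt2
  set P₁ : Ideal ↥R := σ⁻¹ • P₁' with hP₁
  haveI hP₁p : P₁.IsPrime := aux_smul_isPrime σ⁻¹ P₁' hP₁'p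
  have hP₂eq : σ⁻¹ • P₂' = P₂ := by rw [heq, inv_smul_smul]
  have hP₁le : P₁ ≤ P₂ := by
    rw [← hP₂eq]
    intro y hy
    rw [Ideal.mem_pointwise_smul_iff_inv_smul_mem] at hy ⊢
    exact hge hy
  have hP₁c : P₁.comap (Subring.inclusion hFR) = p₁ := by
    rw [show P₁.comap (Subring.inclusion hFR) = P₁'.comap (algebraMap ↥(R ⊓ fixedSubring G S) ↥R)
      from hcomap_smul σ⁻¹ P₁']
    exact hP₁'c
  -- Step 4: going-down for R ⊆ T
  obtain ⟨Q₁, hQ₁p, hQ₁le, hQ₁c⟩ := hGD T hRT P₁ P₂ hP₁p hP₂p hP₁le Q₂ hQ₂p rfl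
  -- Step 5: push down to T'
  refine ⟨Q₁.comap (Subring.inclusion hT'T), hQ₁p.comap _, ?_, ?_⟩
  · refine le_trans (Ideal.comap_mono hQ₁le) ?_
    exact le_of_eq hQ₂c
  · rw [Ideal.comap_comap, ← hcomm, ← Ideal.comap_comap, hQ₁c]
    exact hP₁c
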